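/- Let p be a prime, G a finite abelian p-group isomorphic to ℤ/p^{α_1}ℤ ⊕ ... ⊕ ℤ/p^{α_r}ℤ, and let g_1, ..., g_n be any sequence in G with n ≥ Σ_{j=1}^r (p^{α_j} - 1) + 1. Then there exists a nonempty subset I ⊆ {1, ..., n} with Σ_{i ∈ I} g_i = 0 and |I| ≤ n. -/

import Mathlib

open AddMonoidAlgebra Finset

namespace OlsonAux

variable (p : ℕ) [hp : Fact p.Prime] {r : ℕ} (α : Fin r → ℕ)

abbrev G : Type := ∀ j : Fin r, ZMod (p ^ α j)

abbrev R : Type := AddMonoidAlgebra (ZMod p) (G p α)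

noncomputable def t (j : Fin r) : R p α :=
  AddMonoidAlgebra.single (Pi.single j 1) 1 - 1

noncomputable def J : Ideal (R p α) := Ideal.span (Set.range (t p α))

instance : CharP (R p α) p := by
  have h : Function.Injective (AddMonoidAlgebra.singleZeroRingHom :
      ZMod p →+* R p α) := fun a b hab => by
    exact AddMonoidAlgebra.single_right_injective (m := (0 : G p α)) hab
  exact charP_of_injective_ringHom h p

lemma t_mem_J (j : Fin r) : t p α j ∈ J p α :=
  Ideal.subset_span ⟨j, rfl⟩

lemma t_pow (j : Fin r) : t p α j ^ p ^ α j = 0 := by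
  have h1 : (p ^ α j) • (Pi.single j (1 : ZMod (p ^ α j)) : G p α) = 0 := by
    ext k
    by_cases hk : k = j
    · subst hk
      simp [ZMod.natCast_self]
    · simp [Pi.single_apply, hk]
  have h2 : (AddMonoidAlgebra.single (Pi.single j 1 : G p α) (1 : ZMod p)) ^ (p ^ α j) = 1 := by
    rw [AddMonoidAlgebra.single_pow, h1, one_pow, AddMonoidAlgebra.one_def]
  rw [t, sub_pow_char_pow, h2, one_pow, sub_self]

lemma add_closure {a b : G p α}
    (ha : AddMonoidAlgebra.single a (1 : ZMod p) - 1 ∈ J p α)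
    (hb : AddMonoidAlgebra.single b (1 : ZMod p) - 1 ∈ J p α) :
    AddMonoidAlgebra.single (a + b) (1 : ZMod p) - 1 ∈ J p α := by
  have key : AddMonoidAlgebra.single (a + b) (1 : ZMod p) - 1 =
      (AddMonoidAlgebra.single a (1 : ZMod p) - 1) *
        (AddMonoidAlgebra.single b (1 : ZMod p) - 1) +
      ((AddMonoidAlgebra.single a (1 : ZMod p) - 1) +
        (AddMonoidAlgebra.single b (1 : ZMod p) - 1)) := by
    have : AddMonoidAlgebra.single (a + b) (1 : ZMod p) =
        AddMonoidAlgebra.single a (1 : ZMod p) * AddMonoidAlgebra.single b (1 : ZMod p) := by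
      rw [AddMonoidAlgebra.single_mul_single, mul_one]
    rw [this]; ring
  rw [key]
  exact Ideal.add_mem _ (Ideal.mul_mem_right _ _ ha) (Ideal.add_mem _ ha hb)

lemma single_basis_mem (j : Fin r) (c : ZMod (p ^ α j)) :
    AddMonoidAlgebra.single (Pi.single j c : G p α) (1 : ZMod p) - 1 ∈ J p α := by
  haveI : NeZero (p ^ α j) := NeZero.of_pos (pow_pos hp.out.pos _)
  have hc : (Pi.single j c : G p α) = c.val • (Pi.single j (1 : ZMod (p ^ α j)) : G p α) := by
    ext k
    by_cases hk : k = j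
    · subst hk
      simp only [Pi.single_eq_same, Pi.smul_apply, smul_eq_mul, nsmul_eq_mul, mul_one]
      exact (ZMod.natCast_rightInverse c).symm
    · simp [Pi.single_apply, hk]
  set x := AddMonoidAlgebra.single (Pi.single j (1 : ZMod (p ^ α j)) : G p α) (1 : ZMod p) with hxdef
  have hx : AddMonoidAlgebra.single (c.val • Pi.single j (1 : ZMod (p ^ α j)) : G p α)
      (1 : ZMod p) = x ^ c.val := by
    rw [hxdef, AddMonoidAlgebra.single_pow, one_pow]
  rw [hc, hx]
  have := geom_sum_mul x c.val
  rw [← this]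
  exact Ideal.mul_mem_left _ _ (t_mem_J p α j)

lemma single_sub_one_mem (a : G p α) :
    AddMonoidAlgebra.single a (1 : ZMod p) - 1 ∈ J p α := by
  have key : ∀ s : Finset (Fin r),
      AddMonoidAlgebra.single (∑ j ∈ s, Pi.single j (a j) : G p α) (1 : ZMod p) - 1 ∈ J p α := by
    intro s
    induction s using Finset.induction with
    | empty => simp [AddMonoidAlgebra.one_def]
    | insert _ _ hx ih =>
      rw [Finset.sum_insert hx]
      exact add_closure p α (single_basis_mem p α _ _) ih
  have := key Finset.univ
  rwa [Finset.univ_sum_single] at this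

lemma prod_t_eq_zero {m : ℕ} (hm : (∑ j, (p ^ α j - 1)) + 1 ≤ m) (f : Fin m → Fin r) :
    ∏ i, t p α (f i) = 0 := by
  have hpj : ∀ j : Fin r, 1 ≤ p ^ α j := fun j => Nat.one_le_pow _ _ hp.out.pos
  have pigeon : ∃ j : Fin r,
      p ^ α j ≤ (Finset.univ.filter (fun i => f i = j)).card := by
    by_contra hcon
    push_neg at hcon
    have hsum : m = ∑ j : Fin r, (Finset.univ.filter (fun i => f i = j)).card := by
      simpa using Finset.card_eq_sum_card_fiberwise
        (f := f) (s := Finset.univ) (t := Finset.univ) (fun x _ => Finset.mem_univ _)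
    have : m ≤ ∑ j, (p ^ α j - 1) := by
      rw [hsum]
      exact Finset.sum_le_sum fun j _ => by
        have := hcon j; omega
    omega
  obtain ⟨j0, hj0⟩ := pigeon
  rw [← Finset.prod_fiberwise Finset.univ f (fun i => t p α (f i))]
  refine Finset.prod_eq_zero (Finset.mem_univ j0) ?_
  have hconst : ∏ i ∈ Finset.univ.filter (fun i => f i = j0), t p α (f i)
      = t p α j0 ^ (Finset.univ.filter (fun i => f i = j0)).card := by
    rw [← Finset.prod_const]
    exact Finset.prod_congr rfl fun i hi => by
      rw [(Finset.mem_filter.mp hi).2]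
  rw [hconst]
  exact pow_eq_zero_of_le hj0 (t_pow p α j0)

lemma J_pow_eq_bot {m : ℕ} (hm : (∑ j, (p ^ α j - 1)) + 1 ≤ m) :
    J p α ^ m = ⊥ := by
  rw [J, Ideal.span, Submodule.span_pow, eq_bot_iff, Submodule.span_le]
  intro x hx
  rw [Set.mem_pow] at hx
  obtain ⟨f, hf⟩ := hx
  choose jf hjf using fun i => (f i).2
  have : x = ∏ i, t p α (jf i) := by
    rw [← hf, List.prod_ofFn]
    exact Finset.prod_congr rfl fun i _ => (hjf i).symm
  rw [this, prod_t_eq_zero p α hm]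
  simp

end OlsonAux

/-- Olson's theorem (Davenport constant bound): any sequence of length
`n ≥ 1 + ∑ (p^{αⱼ}-1)` in `ℤ/p^{α₁}ℤ ⊕ ⋯ ⊕ ℤ/p^{α_r}ℤ` has a nonempty zero-sum
subsequence. -/
theorem olson_davenport (p : ℕ) (hp : p.Prime) (r : ℕ) (α : Fin r → ℕ)
    (hα : ∀ j, 0 < α j) (n : ℕ) (hn : (∑ j, (p ^ α j - 1)) + 1 ≤ n)
    (g : Fin n → ∀ j, ZMod (p ^ α j)) :
    ∃ I : Finset (Fin n), I.Nonempty ∧ I.card ≤ n ∧ ∑ i ∈ I, g i = 0 := by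
  haveI : Fact p.Prime := ⟨hp⟩
  by_contra hcon
  push_neg at hcon
  have hno : ∀ I : Finset (Fin n), I.Nonempty → ∑ i ∈ I, g i ≠ 0 := by
    intro I hI
    exact hcon I hI (le_trans (Finset.card_le_univ I) (by simp))
  -- work in the group algebra
  set R := OlsonAux.R p α
  have hP : (∏ i : Fin n, (AddMonoidAlgebra.single (g i) (-1 : ZMod p) + 1) : R) = 0 := by
    have hmem : (∏ i : Fin n, (AddMonoidAlgebra.single (g i) (-1 : ZMod p) + 1) : R)
        ∈ OlsonAux.J p α ^ n := by
      have : (OlsonAux.J p α) ^ n = ∏ _i : Fin n, OlsonAux.J p α := by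
        rw [Finset.prod_const, Finset.card_univ, Fintype.card_fin]
      rw [this]
      refine Ideal.prod_mem_prod fun i _ => ?_
      have h1 : (AddMonoidAlgebra.single (g i) (-1 : ZMod p) + 1 : R)
          = -(AddMonoidAlgebra.single (g i) (1 : ZMod p) - 1) := by
        have h2 : AddMonoidAlgebra.single (g i) (-1 : ZMod p)
            = -AddMonoidAlgebra.single (g i) (1 : ZMod p) := AddMonoidAlgebra.single_neg _ _
        rw [h2]; ring
      rw [h1]
      exact neg_mem (OlsonAux.single_sub_one_mem p α (g i))
    have := OlsonAux.J_pow_eq_bot p α hn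
    rw [this] at hmem
    simpa using hmem
  -- expand the product
  rw [Finset.prod_add] at hP
  have hexp : ∀ I ∈ Finset.univ.powerset,
      ((∏ i ∈ I, AddMonoidAlgebra.single (g i) (-1 : ZMod p)) *
        ∏ i ∈ Finset.univ \ I, (1 : R))
      = AddMonoidAlgebra.single (∑ i ∈ I, g i) ((-1 : ZMod p) ^ I.card) := by
    intro I _
    rw [Finset.prod_const_one, mul_one, AddMonoidAlgebra.prod_single, Finset.prod_const]
  rw [Finset.sum_congr rfl hexp] at hP
  -- evaluate coefficient at 0
  have h0 : ((∑ I ∈ Finset.univ.powerset,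
      AddMonoidAlgebra.single (∑ i ∈ I, g i) ((-1 : ZMod p) ^ I.card) : R)).coeff 0 = 0 := by
    rw [hP]; rfl
  rw [AddMonoidAlgebra.coeff_sum, Finsupp.finset_sum_apply] at h0
  have hterm : ∀ I ∈ (Finset.univ : Finset (Fin n)).powerset, I ≠ ∅ →
      (AddMonoidAlgebra.single (∑ i ∈ I, g i) ((-1 : ZMod p) ^ I.card) : R).coeff 0 = 0 := by
    intro I _ hIne
    have : (∑ i ∈ I, g i) ≠ 0 := hno I (Finset.nonempty_of_ne_empty hIne)
    exact Finsupp.single_eq_of_ne' this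
  rw [Finset.sum_eq_single_of_mem ∅ (Finset.empty_mem_powerset _) hterm] at h0
  simp at h0
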